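/- Let s ≥ 1 and n ≥ 0 be integers and let 0 ≤ ρ ≤ 1/√(2s−1). In the polynomial ring ℝ[{F_x : x ∈ {−1,1}ⁿ}], the polynomial (2^{−n} Σ_{x∈{−1,1}ⁿ} F_x²)^s − 2^{−n} Σ_{x∈{−1,1}ⁿ} (T_ρF(x))^{2s} is a sum of squares of polynomials, where T_ρF(x) denotes the linear form 2^{−n} Σ_{y∈{−1,1}ⁿ} (∏_{i=1}^{n} (1 + ρ xᵢ yᵢ)) F_y. -/

import Mathlib

open MvPolynomial

/-- The point of the cube `{−1,1}` encoded by a Boolean. -/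
def sgn (b : Bool) : ℝ := if b then 1 else -1

open Finset MvPolynomial


section SOS
variable {R : Type*} [CommRing R]

lemma sos_sq (a : R) : IsSumSq (a^2) := by
  simpa [sq] using IsSumSq.sq_add a 0 IsSumSq.zero

lemma sos_sq_mul {p : R} (hp : IsSumSq p) (a : R) : IsSumSq (a^2 * p) := by
  induction hp with
  | zero => simpa using IsSumSq.zero
  | @sq_add b S pS ih =>
      have : a^2 * (b*b + S) = (a*b)*(a*b) + a^2 * S := by ring
      rw [this]; exact IsSumSq.sq_add _ ih

lemma sos_mul {p q : R} (hp : IsSumSq p) (hq : IsSumSq q) : IsSumSq (p * q) := by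
  induction hp with
  | zero => simpa using IsSumSq.zero
  | @sq_add b S pS ih =>
      have : (b*b + S) * q = b^2 * q + S * q := by ring
      rw [this]; exact (sos_sq_mul hq b).add ih

lemma sos_pow {p : R} (hp : IsSumSq p) (n : ℕ) : IsSumSq (p ^ n) := by
  induction n with
  | zero => simpa using sos_sq (1 : R)
  | succ k ih => rw [pow_succ]; exact sos_mul ih hp

lemma sos_sum {ι : Type*} (t : Finset ι) (f : ι → R) (h : ∀ i ∈ t, IsSumSq (f i)) :
    IsSumSq (∑ i ∈ t, f i) := by
  classical
  induction t using Finset.induction_on with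
  | empty => simpa using IsSumSq.zero
  | insert x t hx ih =>
      rw [Finset.sum_insert hx]
      exact (h _ (Finset.mem_insert_self _ _)).add
        (ih fun i hi => h i (Finset.mem_insert_of_mem hi))

lemma sos_pow_sub {x y : R} (hxy : IsSumSq (x - y)) (hx : IsSumSq x) (hy : IsSumSq y)
    (k : ℕ) : IsSumSq (x ^ k - y ^ k) := by
  induction k with
  | zero => simpa using IsSumSq.zero
  | succ m ih =>
      have : x ^ (m+1) - y ^ (m+1) = (x - y) * x ^ m + y * (x ^ m - y ^ m) := by ring
      rw [this]
      exact (sos_mul hxy (sos_pow hx m)).add (sos_mul hy ih)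

end SOS

section MVP
open MvPolynomial
variable {σ : Type*}

lemma sos_C_mul {c : ℝ} (hc : 0 ≤ c) {p : MvPolynomial σ ℝ} (hp : IsSumSq p) :
    IsSumSq (C c * p) := by
  have : (C c : MvPolynomial σ ℝ) = (C (Real.sqrt c))^2 := by
    rw [← map_pow, Real.sq_sqrt hc]
  rw [this]; exact sos_sq_mul hp _

lemma sos_exists {p : MvPolynomial σ ℝ} (hp : IsSumSq p) :
    ∃ (m : ℕ) (q : Fin m → MvPolynomial σ ℝ), p = ∑ j, (q j)^2 := by
  induction hp with
  | zero => exact ⟨0, ![], by simp⟩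
  | @sq_add a S pS ih =>
      obtain ⟨m, q, hq⟩ := ih
      exact ⟨m+1, Fin.cons a q, by simp [Fin.sum_univ_succ, hq, sq]⟩

end MVP

lemma C_half_two {σ : Type*} : (C (2⁻¹:ℝ) : MvPolynomial σ ℝ) * 2 = 1 := by
  rw [← map_ofNat (C : ℝ →+* MvPolynomial σ ℝ) 2, ← map_mul]; norm_num


lemma nat_key (s : ℕ) : ∀ k : ℕ, 2*k ≤ s → 2^k * s.choose (2*k) ≤ s.choose k * (s-1)^k := by
  intro k
  induction k with
  | zero => simp
  | succ k ih =>
      intro hk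
      have hk' : 2*k ≤ s := by omega
      have IH := ih hk'
      obtain ⟨m, rfl⟩ : ∃ m, s = 2*k+2+m := ⟨s - (2*k+2), by omega⟩
      set s := 2*k+2+m with hs
      have c1 : s.choose (2*k+1) * (2*k+1) = s.choose (2*k) * (m+2) := by
        have := Nat.choose_succ_right_eq s (2*k)
        rw [show s - 2*k = m+2 by omega] at this; exact this
      have c2 : s.choose (2*k+2) * (2*k+2) = s.choose (2*k+1) * (m+1) := by
        have := Nat.choose_succ_right_eq s (2*k+1)
        rw [show s - (2*k+1) = m+1 by omega] at this; exact this
      have c3 : s.choose (k+1) * (k+1) = s.choose k * (k+m+2) := by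
        have := Nat.choose_succ_right_eq s k
        rw [show s - k = k+m+2 by omega] at this; exact this
      have hpos : 0 < (2*k+2)*(2*k+1)*(k+1) := by positivity
      apply Nat.le_of_mul_le_mul_right _ hpos
      have e1 : 2^(k+1) * s.choose (2*(k+1)) * ((2*k+2)*(2*k+1)*(k+1)) =
          2^k * s.choose (2*k) * (2*(m+2)*(m+1)*(k+1)) := by
        have h2 : 2*(k+1) = 2*k+2 := by ring
        rw [h2]
        calc 2^(k+1) * s.choose (2*k+2) * ((2*k+2)*(2*k+1)*(k+1))
            = 2^(k+1) * (s.choose (2*k+2) * (2*k+2)) * ((2*k+1)*(k+1)) := by ring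
          _ = 2^(k+1) * (s.choose (2*k+1) * (m+1)) * ((2*k+1)*(k+1)) := by rw [c2]
          _ = 2^(k+1) * (s.choose (2*k+1) * (2*k+1)) * ((m+1)*(k+1)) := by ring
          _ = 2^(k+1) * (s.choose (2*k) * (m+2)) * ((m+1)*(k+1)) := by rw [c1]
          _ = 2^k * s.choose (2*k) * (2*(m+2)*(m+1)*(k+1)) := by ring
      have e2 : s.choose (k+1) * (s-1)^(k+1) * ((2*k+2)*(2*k+1)*(k+1)) =
          s.choose k * (s-1)^k * ((k+m+2) * (2*k+m+1) * ((2*k+2)*(2*k+1))) := by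
        have hsub : s - 1 = 2*k+m+1 := by omega
        calc s.choose (k+1) * (s-1)^(k+1) * ((2*k+2)*(2*k+1)*(k+1))
            = (s.choose (k+1) * (k+1)) * ((s-1)^(k+1) * ((2*k+2)*(2*k+1))) := by ring
          _ = (s.choose k * (k+m+2)) * ((s-1)^(k+1) * ((2*k+2)*(2*k+1))) := by rw [c3]
          _ = s.choose k * (s-1)^k * ((k+m+2) * (s-1) * ((2*k+2)*(2*k+1))) := by ring
          _ = s.choose k * (s-1)^k * ((k+m+2) * (2*k+m+1) * ((2*k+2)*(2*k+1))) := by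
              rw [hsub]
      rw [e1, e2]
      have hfac : 2*(m+2)*(m+1)*(k+1) ≤ (k+m+2) * (2*k+m+1) * ((2*k+2)*(2*k+1)) := by
        have h1 : (m+2)*(m+1)*1 ≤ (k+m+2) * (2*k+m+1) * (2*k+1) :=
          Nat.mul_le_mul (Nat.mul_le_mul (by omega) (by omega)) (by omega)
        calc 2*(m+2)*(m+1)*(k+1) = ((m+2)*(m+1)*1) * (2*(k+1)) := by ring
          _ ≤ ((k+m+2) * (2*k+m+1) * (2*k+1)) * (2*(k+1)) := Nat.mul_le_mul_right _ h1
          _ = (k+m+2) * (2*k+m+1) * ((2*k+2)*(2*k+1)) := by ring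
      calc 2^k * s.choose (2*k) * (2*(m+2)*(m+1)*(k+1))
          ≤ s.choose k * (s-1)^k * (2*(m+2)*(m+1)*(k+1)) := Nat.mul_le_mul_right _ IH
        _ ≤ s.choose k * (s-1)^k * ((k+m+2) * (2*k+m+1) * ((2*k+2)*(2*k+1))) :=
            Nat.mul_le_mul_left _ hfac


lemma coeff_key (s : ℕ) (hs : 1 ≤ s) (ρ : ℝ) (hρ0 : 0 ≤ ρ) (hρ2 : ρ^2*(2*(s:ℝ)-1) ≤ 1)
    (k : ℕ) (hk : 2*k ≤ s) :
    (s.choose (2*k) : ℝ) * (2*ρ)^(2*k) ≤ (s.choose k : ℝ) * (1 - ρ^2)^k := by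
  have hρ1 : ρ^2 ≤ 1 := by nlinarith [(Nat.one_le_cast (α := ℝ)).mpr hs]
  have e1 : (2*ρ)^(2*k) = 2^k * (2*ρ^2)^k := by
    rw [pow_mul]
    rw [← mul_pow]
    congr 1; ring
  have hnat : ((2^k * s.choose (2*k) : ℕ) : ℝ) ≤ ((s.choose k * (s-1)^k : ℕ) : ℝ) :=
    Nat.cast_le.mpr (nat_key s k hk)
  push_cast [Nat.cast_sub hs] at hnat
  have h2 : (0:ℝ) ≤ (2*ρ^2)^k := by positivity
  have step1 : (s.choose (2*k) : ℝ) * (2*ρ)^(2*k)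
      ≤ (s.choose k : ℝ) * (((s:ℝ)-1)^k * (2*ρ^2)^k) := by
    rw [e1]
    calc (s.choose (2*k) : ℝ) * (2^k * (2*ρ^2)^k)
        = (2^k * (s.choose (2*k):ℝ)) * (2*ρ^2)^k := by ring
      _ ≤ ((s.choose k:ℝ) * ((s:ℝ)-1)^k) * (2*ρ^2)^k := by
          exact mul_le_mul_of_nonneg_right hnat h2
      _ = (s.choose k : ℝ) * (((s:ℝ)-1)^k * (2*ρ^2)^k) := by ring
  refine step1.trans ?_
  apply mul_le_mul_of_nonneg_left _ (by positivity)
  rw [← mul_pow]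
  apply pow_le_pow_left₀
  · have h1 : (1:ℝ) ≤ (s:ℝ) := by exact_mod_cast hs
    nlinarith
  · nlinarith [(Nat.one_le_cast (α := ℝ)).mpr hs]

lemma lagrange {ι : Type*} [Fintype ι] (G H : ι → MvPolynomial σ ℝ) :
    IsSumSq ((∑ c, (G c)^2) * (∑ c, (H c)^2) - (∑ c, G c * H c)^2) := by
  have key : (∑ c, (G c)^2) * (∑ c, (H c)^2) - (∑ c, G c * H c)^2
      = C (2⁻¹:ℝ) * ∑ c, ∑ d, (G c * H d - G d * H c)^2 := by
    have expand : ∀ c : ι, ∑ d, (G c * H d - G d * H c)^2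
        = ∑ d, ((G c)^2*(H d)^2 + (H c)^2*(G d)^2 - 2*((G c*H c)*(G d*H d))) :=
      fun c => Finset.sum_congr rfl fun d _ => by ring
    have hsum : ∑ c, ∑ d, (G c * H d - G d * H c)^2
        = (∑ c, (G c)^2) * (∑ d, (H d)^2) + (∑ c, (H c)^2) * (∑ d, (G d)^2)
          - 2 * ((∑ c, G c * H c) * (∑ d, G d * H d)) := by
      rw [Finset.sum_congr rfl fun c _ => expand c]
      rw [Finset.sum_mul_sum, Finset.sum_mul_sum, Finset.sum_mul_sum]
      simp only [Finset.mul_sum]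
      simp only [Finset.sum_add_distrib, Finset.sum_sub_distrib]
    rw [hsum]
    have h2 := (C_half_two (σ := σ))
    linear_combination ((∑ c, G c * H c) * (∑ d, G d * H d) - (∑ c, (G c)^2) * (∑ d, (H d)^2)) * h2
  rw [key]
  exact sos_C_mul (by norm_num)
    (sos_sum _ _ fun c _ => sos_sum _ _ fun d _ => sos_sq _)


lemma sum_even_reindex {M : Type*} [AddCommMonoid M] (t : ℕ → M) (s : ℕ)
    (h0 : ∀ j, ¬ Even j → t j = 0) (h1 : ∀ j, s < j → t j = 0) :
    ∑ j ∈ Finset.range (s+1), t j = ∑ k ∈ Finset.range (s+1), t (2*k) := by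
  have pair : ∀ m, ∑ j ∈ Finset.range (2*m), t j
      = ∑ k ∈ Finset.range m, (t (2*k) + t (2*k+1)) := by
    intro m
    induction m with
    | zero => simp
    | succ p ih =>
        rw [show 2*(p+1) = 2*p+1+1 by ring, Finset.sum_range_succ, Finset.sum_range_succ,
          ih, Finset.sum_range_succ]
        abel
  have ext : ∑ j ∈ Finset.range (s+1), t j = ∑ j ∈ Finset.range (2*(s+1)), t j := by
    apply Finset.sum_subset
    · intro x hx; simp only [Finset.mem_range] at *; omega
    · intro x _ hx; exact h1 x (by simpa using hx)
  rw [ext, pair (s+1)]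
  refine Finset.sum_congr rfl fun k _ => ?_
  rw [h0 (2*k+1) (by simp [Nat.even_add_one, parity_simps]), add_zero]

section
variable {σ : Type*}

lemma key_expand (s : ℕ) (hs : 1 ≤ s) (ρ : ℝ) (hρ0 : 0 ≤ ρ) (hρ2 : ρ^2*(2*(s:ℝ)-1) ≤ 1)
    (Q S Rr : MvPolynomial σ ℝ) (hQ : IsSumSq Q) (hS : IsSumSq S)
    (hlag : IsSumSq (Q*S - Rr^2)) :
    IsSumSq ((Q+S)^s - C (2⁻¹:ℝ) *
      (((Q + C (ρ^2)*S) + C (2*ρ)*Rr)^s + ((Q + C (ρ^2)*S) - C (2*ρ)*Rr)^s)) := by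
  have hρ1 : ρ^2 ≤ 1 := by nlinarith [(Nat.one_le_cast (α := ℝ)).mpr hs]
  set u : MvPolynomial σ ℝ := Q + C (ρ^2)*S with hu
  set v : MvPolynomial σ ℝ := C (2*ρ)*Rr with hv
  set t : ℕ → MvPolynomial σ ℝ :=
    fun j => C ((s.choose j : ℝ) * (if Even j then (2*ρ)^j else 0)) * (u^(s-j) * Rr^j)
    with ht
  have hu_sos : IsSumSq u := hQ.add (sos_C_mul (by positivity) hS)
  have huS : IsSumSq (u*S - Rr^2) := by
    have e : u*S - Rr^2 = (Q*S - Rr^2) + C (ρ^2) * S^2 := by rw [hu]; ring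
    rw [e]; exact hlag.add (sos_C_mul (by positivity) (sos_sq S))
  have hcast : ∀ m : ℕ, ((m : ℕ) : MvPolynomial σ ℝ) = C ((m:ℝ)) :=
    fun m => (map_natCast (C : ℝ →+* MvPolynomial σ ℝ) m).symm
  -- average expansion
  have havg : C (2⁻¹:ℝ) * ((u+v)^s + (u-v)^s) = ∑ j ∈ Finset.range (s+1), t j := by
    have e1 : (u+v)^s = ∑ k ∈ Finset.range (s+1), v^k * u^(s-k) * ((s.choose k : ℕ) : MvPolynomial σ ℝ) := by
      rw [add_comm u v]; exact add_pow v u s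
    have e2 : (u-v)^s = ∑ k ∈ Finset.range (s+1), (-v)^k * u^(s-k) * ((s.choose k : ℕ) : MvPolynomial σ ℝ) := by
      rw [sub_eq_add_neg, add_comm]; exact add_pow (-v) u s
    rw [e1, e2, ← Finset.sum_add_distrib, Finset.mul_sum]
    refine Finset.sum_congr rfl fun k _ => ?_
    have hvk : v^k = C ((2*ρ)^k) * Rr^k := by rw [hv, mul_pow, map_pow]
    rcases Nat.even_or_odd k with he | ho
    · rw [he.neg_pow, hvk, ht]
      simp only [if_pos he]
      rw [hcast (s.choose k), map_mul]
      have h2 := (C_half_two (σ := σ))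
      linear_combination (C ((2*ρ)^k) * Rr^k * u^(s-k) * C ((s.choose k : ℝ))) * h2
    · rw [ho.neg_pow, ht]
      simp only [if_neg (Nat.not_even_iff_odd.mpr ho)]
      rw [mul_zero, map_zero, zero_mul]
      ring
  -- (Q+S)^s expansion
  have habove : (Q+S)^s = ∑ k ∈ Finset.range (s+1),
      C ((s.choose k:ℝ) * (1-ρ^2)^k) * (u^(s-k) * S^k) := by
    have hQS : Q + S = C (1-ρ^2) * S + u := by rw [hu, map_sub, map_one]; ring
    rw [hQS, add_pow]
    refine Finset.sum_congr rfl fun k _ => ?_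
    rw [mul_pow, hcast (s.choose k), map_mul, map_pow]
    ring
  -- reindex
  have h0 : ∀ j, ¬ Even j → t j = 0 := by
    intro j hj; rw [ht]; simp only [if_neg hj, mul_zero, map_zero, zero_mul]
  have h1 : ∀ j, s < j → t j = 0 := by
    intro j hj; rw [ht]
    simp only [Nat.choose_eq_zero_of_lt hj, Nat.cast_zero, zero_mul, map_zero]
  have split : (Q+S)^s - C (2⁻¹:ℝ) * ((u+v)^s + (u-v)^s)
      = ∑ k ∈ Finset.range (s+1),
          (C ((s.choose k:ℝ) * (1-ρ^2)^k) * (u^(s-k) * S^k) - t (2*k)) := by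
    rw [habove, havg, sum_even_reindex t s h0 h1, ← Finset.sum_sub_distrib]
  rw [show ((Q + C (ρ^2)*S) + C (2*ρ)*Rr) = u + v from rfl,
    show ((Q + C (ρ^2)*S) - C (2*ρ)*Rr) = u - v from rfl, split]
  apply sos_sum
  intro k hk'
  by_cases hk : 2*k ≤ s
  · have htk : t (2*k) = C ((s.choose (2*k):ℝ) * (2*ρ)^(2*k)) * (u^(s-2*k) * Rr^(2*k)) := by
      rw [ht]; simp only [if_pos (even_two_mul k)]
    have hpow : u^(s-k) = u^(s-2*k) * u^k := by rw [← pow_add]; congr 1; omega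
    have hsplit2 : C ((s.choose k:ℝ)*(1-ρ^2)^k) * (u^(s-k)*S^k)
          - C ((s.choose (2*k):ℝ) * (2*ρ)^(2*k)) * (u^(s-2*k) * Rr^(2*k))
        = C ((s.choose k:ℝ)*(1-ρ^2)^k - (s.choose (2*k):ℝ) * (2*ρ)^(2*k)) * (u^(s-k)*S^k)
          + C ((s.choose (2*k):ℝ) * (2*ρ)^(2*k)) * (u^(s-2*k) * ((u*S)^k - (Rr^2)^k)) := by
      have hm1 : (u*S)^k = u^k * S^k := mul_pow u S k
      have hm2 : (Rr^2)^k = Rr^(2*k) := (pow_mul Rr 2 k).symm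
      rw [map_sub, hpow, hm1, hm2]; ring
    rw [htk, hsplit2]
    apply IsSumSq.add
    · exact sos_C_mul (sub_nonneg.mpr (coeff_key s hs ρ hρ0 hρ2 k hk))
        (sos_mul (sos_pow hu_sos _) (sos_pow hS _))
    · exact sos_C_mul (by positivity)
        (sos_mul (sos_pow hu_sos _)
          (sos_pow_sub huS (sos_mul hu_sos hS) (sos_sq Rr) k))
  · rw [h1 (2*k) (by omega), sub_zero]
    exact sos_C_mul (mul_nonneg (Nat.cast_nonneg _) (pow_nonneg (by nlinarith) _))
      (sos_mul (sos_pow hu_sos _) (sos_pow hS _))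
end





lemma main_sos {σ : Type*} (s : ℕ) (hs : 1 ≤ s) (ρ : ℝ) (hρ0 : 0 ≤ ρ)
    (hρ2 : ρ^2*(2*(s:ℝ)-1) ≤ 1) :
    ∀ (n : ℕ) (ι : Type) (_ : Fintype ι) (f : (Fin n → Bool) → ι → MvPolynomial σ ℝ),
    IsSumSq ((C (((2:ℝ)^n)⁻¹) * ∑ x : Fin n → Bool, ∑ c : ι, (f x c)^2)^s
      - C (((2:ℝ)^n)⁻¹) * ∑ x : Fin n → Bool,
          (∑ c : ι, (C (((2:ℝ)^n)⁻¹) * ∑ y : Fin n → Bool,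
            C (∏ i, (1 + ρ * sgn (x i) * sgn (y i))) * f y c)^2)^s) := by
  intro n
  induction n with
  | zero =>
      intro ι _ f
      haveI : Unique (Fin 0 → Bool) := ⟨⟨fun i => i.elim0⟩, fun a => funext fun i => i.elim0⟩
      simp only [pow_zero, inv_one, map_one, one_mul, Fin.prod_univ_zero,
        Fintype.sum_unique]
      rw [sub_self]
      exact IsSumSq.zero
  | succ n IH =>
      intro ι instι f
      have h2 := (C_half_two (σ := σ))
      have hsgnt : sgn true = 1 := rfl
      have hsgnf : sgn false = -1 := rfl
      -- reindexing sums over the cube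
      have hsum_reindex : ∀ (F : (Fin (n+1) → Bool) → MvPolynomial σ ℝ),
          (∑ y' : Fin (n+1) → Bool, F y') = ∑ b' : Bool, ∑ y : Fin n → Bool, F (Fin.cons b' y) := by
        intro F
        rw [← Equiv.sum_comp (Fin.consEquiv (fun _ => Bool)) F, Fintype.sum_prod_type]
        rfl
      have hN : C (((2:ℝ)^(n+1))⁻¹) = (C (2⁻¹:ℝ) : MvPolynomial σ ℝ) * C (((2:ℝ)^n)⁻¹) := by
        rw [← map_mul]
        congr 1
        rw [pow_succ, mul_inv]
        ring
      -- even/odd parts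
      set g : (Fin n → Bool) → ι → MvPolynomial σ ℝ :=
        fun x c => C (2⁻¹:ℝ) * (f (Fin.cons true x) c + f (Fin.cons false x) c) with hg
      set h : (Fin n → Bool) → ι → MvPolynomial σ ℝ :=
        fun x c => C (2⁻¹:ℝ) * (f (Fin.cons true x) c - f (Fin.cons false x) c) with hh
      have hf : ∀ (b : Bool) (x : Fin n → Bool) (c : ι),
          f (Fin.cons b x) c = g x c + C (sgn b) * h x c := by
        intro b x c
        cases b <;> simp only [hg, hh, hsgnt, hsgnf, map_one, map_neg, map_one, one_mul, neg_mul]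
        · linear_combination (-(f (Fin.cons false x) c)) * h2
        · linear_combination (-(f (Fin.cons true x) c)) * h2
      -- weights
      set w : (Fin n → Bool) → (Fin n → Bool) → ℝ :=
        fun x y => ∏ i, (1 + ρ * sgn (x i) * sgn (y i)) with hwdef
      have hw : ∀ (b b' : Bool) (x y : Fin n → Bool),
          (∏ i : Fin (n+1), (1 + ρ * sgn ((Fin.cons b x : Fin (n+1) → Bool) i) * sgn ((Fin.cons b' y : Fin (n+1) → Bool) i)))
            = (1 + ρ * sgn b * sgn b') * w x y := by
        intro b b' x y
        rw [Fin.prod_univ_succ]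
        simp [Fin.cons_zero, Fin.cons_succ, hwdef]
      -- smoothed parts
      set G : (Fin n → Bool) → ι → MvPolynomial σ ℝ :=
        fun x c => C (((2:ℝ)^n)⁻¹) * ∑ y : Fin n → Bool, C (w x y) * g y c with hG
      set H : (Fin n → Bool) → ι → MvPolynomial σ ℝ :=
        fun x c => C (((2:ℝ)^n)⁻¹) * ∑ y : Fin n → Bool, C (w x y) * h y c with hH
      have hT : ∀ (b : Bool) (x : Fin n → Bool) (c : ι),
          C (((2:ℝ)^(n+1))⁻¹) * ∑ y' : Fin (n+1) → Bool,
              C (∏ i, (1 + ρ * sgn ((Fin.cons b x : Fin (n+1) → Bool) i) * sgn (y' i))) * f y' c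
            = G x c + C (ρ * sgn b) * H x c := by
        intro b x c
        rw [hsum_reindex (fun y' => C (∏ i, (1 + ρ * sgn ((Fin.cons b x : Fin (n+1) → Bool) i) * sgn (y' i))) * f y' c)]
        rw [Fintype.sum_bool]
        simp only [hw, hf, hN, hG, hH]
        simp only [mul_add, Finset.mul_sum]
        rw [← Finset.sum_add_distrib, ← Finset.sum_add_distrib]
        refine Finset.sum_congr rfl fun y _ => ?_
        simp only [hsgnt, hsgnf, map_one, map_neg, map_mul, map_add, mul_one, mul_neg, neg_mul]
        linear_combination (C (((2:ℝ)^n)⁻¹) * C (w x y) *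
          (g y c + C ρ * C (sgn b) * h y c)) * h2
      -- A identity
      have hA : C (((2:ℝ)^(n+1))⁻¹) * ∑ x' : Fin (n+1) → Bool, ∑ c : ι, (f x' c)^2
          = C (((2:ℝ)^n)⁻¹) * ∑ x : Fin n → Bool,
              (∑ c : ι, (g x c)^2 + ∑ c : ι, (h x c)^2) := by
        rw [hsum_reindex (fun x' => ∑ c : ι, (f x' c)^2), Fintype.sum_bool]
        simp only [hf, hN, hsgnt, hsgnf, map_one, map_neg, one_mul, neg_mul]
        simp only [mul_add, Finset.mul_sum]
        rw [← Finset.sum_add_distrib]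
        refine Finset.sum_congr rfl fun x _ => ?_
        rw [← Finset.sum_add_distrib, ← Finset.sum_add_distrib]
        refine Finset.sum_congr rfl fun c _ => ?_
        linear_combination (C (((2:ℝ)^n)⁻¹) * ((g x c)^2 + (h x c)^2)) * h2
      -- B identity
      have hB : C (((2:ℝ)^(n+1))⁻¹) * ∑ x' : Fin (n+1) → Bool,
            (∑ c : ι, (C (((2:ℝ)^(n+1))⁻¹) * ∑ y' : Fin (n+1) → Bool,
              C (∏ i, (1 + ρ * sgn (x' i) * sgn (y' i))) * f y' c)^2)^s
          = C (((2:ℝ)^n)⁻¹) * ∑ x : Fin n → Bool, (C (2⁻¹:ℝ) *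
              ((∑ c : ι, (G x c + C ρ * H x c)^2)^s
                + (∑ c : ι, (G x c - C ρ * H x c)^2)^s)) := by
        rw [hsum_reindex (fun x' => (∑ c : ι, (C (((2:ℝ)^(n+1))⁻¹) *
          ∑ y' : Fin (n+1) → Bool,
            C (∏ i, (1 + ρ * sgn (x' i) * sgn (y' i))) * f y' c)^2)^s), Fintype.sum_bool]
        simp only [hT, hsgnt, hsgnf, mul_one, mul_neg_one, map_neg, neg_mul,
          ← sub_eq_add_neg]
        rw [hN]
        simp only [mul_add, Finset.mul_sum]
        rw [← Finset.sum_add_distrib]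
        refine Finset.sum_congr rfl fun x _ => ?_
        ring
      -- expanding the squared sums
      have hplus : ∀ x : Fin n → Bool, ∑ c : ι, (G x c + C ρ * H x c)^2
          = ((∑ c : ι, (G x c)^2) + C (ρ^2) * (∑ c : ι, (H x c)^2))
            + C (2*ρ) * (∑ c : ι, G x c * H x c) := by
        intro x
        have e : ∀ c : ι, (G x c + C ρ * H x c)^2
            = ((G x c)^2 + C (ρ^2) * (H x c)^2) + C (2*ρ) * (G x c * H x c) := by
          intro c
          rw [map_pow, map_mul, map_ofNat]
          ring
        rw [Finset.sum_congr rfl (fun c _ => e c), Finset.sum_add_distrib,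
          Finset.sum_add_distrib, ← Finset.mul_sum, ← Finset.mul_sum]
      have hminus : ∀ x : Fin n → Bool, ∑ c : ι, (G x c - C ρ * H x c)^2
          = ((∑ c : ι, (G x c)^2) + C (ρ^2) * (∑ c : ι, (H x c)^2))
            - C (2*ρ) * (∑ c : ι, G x c * H x c) := by
        intro x
        have e : ∀ c : ι, (G x c - C ρ * H x c)^2
            = ((G x c)^2 + C (ρ^2) * (H x c)^2) - C (2*ρ) * (G x c * H x c) := by
          intro c
          rw [map_pow, map_mul, map_ofNat]
          ring
        rw [Finset.sum_congr rfl (fun c _ => e c), Finset.sum_sub_distrib,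
          Finset.sum_add_distrib, ← Finset.mul_sum, ← Finset.mul_sum]
      -- pointwise SOS
      have hpt : ∀ x : Fin n → Bool, IsSumSq ((∑ c : ι, (G x c)^2 + ∑ c : ι, (H x c)^2)^s
          - C (2⁻¹:ℝ) * ((∑ c : ι, (G x c + C ρ * H x c)^2)^s
            + (∑ c : ι, (G x c - C ρ * H x c)^2)^s)) := by
        intro x
        rw [hplus x, hminus x]
        exact key_expand s hs ρ hρ0 hρ2 _ _ _
          (sos_sum _ _ fun c _ => sos_sq _)
          (sos_sum _ _ fun c _ => sos_sq _)
          (lagrange (fun c => G x c) (fun c => H x c))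
      -- induction hypothesis with doubled coordinates
      have IHk := IH (ι ⊕ ι) inferInstance (fun x => Sum.elim (g x) (h x))
      simp only [Fintype.sum_sum_type, Sum.elim_inl, Sum.elim_inr] at IHk
      have hwr : ∀ x y : Fin n → Bool,
          (∏ i, (1 + ρ * sgn (x i) * sgn (y i))) = w x y := fun _ _ => rfl
      have hGr : ∀ (x : Fin n → Bool) (c : ι),
          C (((2:ℝ)^n)⁻¹) * ∑ y : Fin n → Bool, C (w x y) * g y c = G x c := fun _ _ => rfl
      have hHr : ∀ (x : Fin n → Bool) (c : ι),
          C (((2:ℝ)^n)⁻¹) * ∑ y : Fin n → Bool, C (w x y) * h y c = H x c := fun _ _ => rfl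
      simp only [hwr, hGr, hHr] at IHk
      -- assembly
      rw [hA, hB]
      have final_eq : (C (((2:ℝ)^n)⁻¹) * ∑ x : Fin n → Bool,
            (∑ c : ι, (g x c)^2 + ∑ c : ι, (h x c)^2))^s
          - C (((2:ℝ)^n)⁻¹) * ∑ x : Fin n → Bool, (C (2⁻¹:ℝ) *
              ((∑ c : ι, (G x c + C ρ * H x c)^2)^s
                + (∑ c : ι, (G x c - C ρ * H x c)^2)^s))
          = ((C (((2:ℝ)^n)⁻¹) * ∑ x : Fin n → Bool,
                (∑ c : ι, (g x c)^2 + ∑ c : ι, (h x c)^2))^s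
              - C (((2:ℝ)^n)⁻¹) * ∑ x : Fin n → Bool,
                  (∑ c : ι, (G x c)^2 + ∑ c : ι, (H x c)^2)^s)
            + C (((2:ℝ)^n)⁻¹) * ∑ x : Fin n → Bool,
                ((∑ c : ι, (G x c)^2 + ∑ c : ι, (H x c)^2)^s
                  - C (2⁻¹:ℝ) * ((∑ c : ι, (G x c + C ρ * H x c)^2)^s
                    + (∑ c : ι, (G x c - C ρ * H x c)^2)^s)) := by
        rw [Finset.sum_sub_distrib]
        ring
      rw [final_eq]
      exact IHk.add (sos_C_mul (by positivity) (sos_sum _ _ fun x _ => hpt x))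

/-- For `s ≥ 1`, `n ≥ 0`, and `0 ≤ ρ ≤ 1/√(2s−1)`, in the polynomial ring
`ℝ[{F_x : x ∈ {−1,1}ⁿ}]`, the polynomial
`(2^{−n} Σₓ F_x²)^s − 2^{−n} Σₓ (T_ρF(x))^{2s}`
is a sum of squares, where `T_ρF(x) = 2^{−n} Σ_y (∏ᵢ (1 + ρ xᵢ yᵢ)) F_y`. -/
theorem stmt_3 (s n : ℕ) (hs : 1 ≤ s) (ρ : ℝ)
    (hρ0 : 0 ≤ ρ) (hρ1 : ρ ≤ 1 / Real.sqrt (2*(s:ℝ) - 1)) :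
    ∃ (m : ℕ) (q : Fin m → MvPolynomial (Fin n → Bool) ℝ),
      (C (((2:ℝ)^n)⁻¹) * ∑ x : Fin n → Bool, (X x)^2)^s
        - C (((2:ℝ)^n)⁻¹) *
            ∑ x : Fin n → Bool,
              (C (((2:ℝ)^n)⁻¹) *
                ∑ y : Fin n → Bool,
                  C (∏ i, (1 + ρ * sgn (x i) * sgn (y i))) * X y)^(2*s)
      = ∑ j, (q j)^2 := by
  have hs1 : (1:ℝ) ≤ (s:ℝ) := by exact_mod_cast hs
  have ht : (0:ℝ) < 2*(s:ℝ) - 1 := by linarith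
  have hρ2 : ρ^2*(2*(s:ℝ)-1) ≤ 1 := by
    have h1 : ρ^2 ≤ (1 / Real.sqrt (2*(s:ℝ) - 1))^2 := by
      apply pow_le_pow_left₀ hρ0 hρ1
    rw [div_pow, one_pow, Real.sq_sqrt ht.le] at h1
    calc ρ^2*(2*(s:ℝ)-1) ≤ (1/(2*(s:ℝ)-1))*(2*(s:ℝ)-1) :=
          mul_le_mul_of_nonneg_right h1 ht.le
      _ = 1 := by field_simp
  have key := main_sos (σ := Fin n → Bool) s hs ρ hρ0 hρ2 n Unit inferInstance
    (fun x _ => X x)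
  simp only [Fintype.sum_unique] at key
  apply sos_exists
  simp only [pow_mul]
  exact key
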